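/- arXiv:1707.04075 — 2 statements merged into one kernel-verified Lean document; each statement's English description precedes it below -/
import Mathlib

section
/- Let λ be a partition of n, let O be a multiset of powers of p summing to n, and let P be a p-subgroup of the symmetric group S_n whose orbit type on {1,…,n} is O. Then O is a rearrangement of a refinement of O_λ if and only if P is conjugate in S_n to a subgroup of P_λ. -/
open scoped BigOperators

/-! ## Brauer construction for representations of finite groups -/

section Brauer

variable {F : Type} [Field F] {G : Type} [Group G]
variable {V : Type} [AddCommGroup V] [Module F V]

/-- The submodule of `P`-fixed points of a representation. -/
def repFixed (ρ : Representation F G V) (P : Subgroup G) : Submodule F V where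
  carrier := {v | ∀ g ∈ P, ρ g v = v}
  add_mem' := by
    intro a b ha hb g hg
    simp [map_add, ha g hg, hb g hg]
  zero_mem' := by
    intro g hg
    simp
  smul_mem' := by
    intro c v hv g hg
    simp [map_smul, hv g hg]

/-- The relative trace map `Tr_Q^P` (as a bare function, summing over a set of
left coset representatives of `Q` in `P`). -/
noncomputable def relTrace [Finite G] (ρ : Representation F G V) (P Q : Subgroup G)
    (v : V) : V := by
  classical
  have : Fintype (P ⧸ Q.subgroupOf P) := Fintype.ofFinite _
  exact ∑ x : P ⧸ Q.subgroupOf P, ρ ((Quotient.out x : ↥P) : G) v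

/-- The subspace `Tr^P(M) = Σ_{Q < P} Tr_Q^P (M^Q)` (as a submodule of `V`). -/
noncomputable def brauerTraceSub [Finite G] (ρ : Representation F G V) (P : Subgroup G) :
    Submodule F V :=
  Submodule.span F {w | ∃ Q : Subgroup G, Q < P ∧ ∃ v ∈ repFixed ρ Q, w = relTrace ρ P Q v}

/-- The dimension of the Brauer construction `M(P) = M^P / Tr^P(M)`. -/
noncomputable def brauerDim [Finite G] (ρ : Representation F G V) (P : Subgroup G) : ℕ :=
  Module.finrank F
    (↥(repFixed ρ P) ⧸ ((brauerTraceSub ρ P).comap (repFixed ρ P).subtype))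

/-- `σ` is (isomorphic to) a direct summand of `ρ`: there is an equivariant split
injection of `σ` into `ρ`. -/
def IsRepSummand {W : Type} [AddCommGroup W] [Module F W]
    (ρ : Representation F G V) (σ : Representation F G W) : Prop :=
  ∃ (ι : W →ₗ[F] V) (π : V →ₗ[F] W),
    (∀ g w, ι (σ g w) = ρ g (ι w)) ∧ (∀ g v, π (ρ g v) = σ g (π v)) ∧ ∀ w, π (ι w) = w

/-- A representation is indecomposable: nonzero, and admitting no nontrivial
decomposition into two invariant submodules. -/
def IsIndecomposableRep (ρ : Representation F G V) : Prop :=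
  (∃ v : V, v ≠ 0) ∧
  ∀ A B : Submodule F V, (∀ g, ∀ v ∈ A, ρ g v ∈ A) → (∀ g, ∀ v ∈ B, ρ g v ∈ B) →
    A ⊓ B = ⊥ → A ⊔ B = ⊤ → A = ⊥ ∨ B = ⊥

/-- Isomorphism of representations. -/
def RepIso {W : Type} [AddCommGroup W] [Module F W]
    (ρ : Representation F G V) (σ : Representation F G W) : Prop :=
  ∃ e : V ≃ₗ[F] W, ∀ g v, e (ρ g v) = σ g (e v)

end Brauer

/-! ## Compositions, partitions, tabloids and Young modules -/

section Young

/-- A composition of `n` as a finitely supported function `ℕ → ℕ` with sum `n`. -/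
def IsCompositionFn (c : ℕ → ℕ) (n : ℕ) : Prop :=
  (Function.support c).Finite ∧ ∑ᶠ j, c j = n

/-- A partition of `n` as a finitely supported weakly decreasing function `ℕ → ℕ`
with sum `n`. -/
def IsPartitionFn (c : ℕ → ℕ) (n : ℕ) : Prop :=
  IsCompositionFn c n ∧ Antitone c

/-- A `p`-restricted partition: all successive differences (including the last
part) are `< p`. -/
def IsPRestrictedFn (p : ℕ) (c : ℕ → ℕ) : Prop := ∀ j, c j - c (j + 1) < p

/-- The dominance order: `Dominates lam mu` means `lam ⊵ mu`. -/
def Dominates (lam mu : ℕ → ℕ) : Prop :=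
  ∀ N, ∑ j ∈ Finset.range N, mu j ≤ ∑ j ∈ Finset.range N, lam j

/-- Strict dominance `lam ⊳ mu`. -/
def StrictDominates (lam mu : ℕ → ℕ) : Prop := Dominates lam mu ∧ lam ≠ mu

/-- A `c`-tabloid: a tuple of pairwise disjoint subsets of `{1,…,n}` covering
everything, the `j`-th of size `c j`. -/
structure Tabloid (n : ℕ) (c : ℕ → ℕ) where
  row : ℕ → Finset (Fin n)
  disj : ∀ i j, i ≠ j → Disjoint (row i) (row j)
  card_row : ∀ j, (row j).card = c j
  cover : ∀ x, ∃ j, x ∈ row j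

theorem Tabloid.ext' {n : ℕ} {c : ℕ → ℕ} {T S : Tabloid n c} (h : T.row = S.row) :
    T = S := by
  cases T; cases S; simp_all

/-- The natural action of the symmetric group on tabloids. -/
instance {n : ℕ} {c : ℕ → ℕ} : MulAction (Equiv.Perm (Fin n)) (Tabloid n c) where
  smul σ T :=
    { row := fun j => (T.row j).image σ
      disj := fun i j h => (Finset.disjoint_image σ.injective).mpr (T.disj i j h)
      card_row := fun j => by
        rw [Finset.card_image_of_injective _ σ.injective, T.card_row]
      cover := fun x => by
        obtain ⟨j, hj⟩ := T.cover (σ⁻¹ x)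
        exact ⟨j, Finset.mem_image.mpr ⟨σ⁻¹ x, hj, by simp⟩⟩ }
  one_smul T := Tabloid.ext' (by funext j; exact Finset.image_id)
  mul_smul a b T := Tabloid.ext' (by
    funext j
    show Finset.image (⇑(a * b)) _ = Finset.image ⇑a (Finset.image ⇑b _)
    rw [Finset.image_image]
    rfl)

/-- The Young permutation module `M^c`, as the permutation representation of
`S_n` on the free `F`-module on the set of `c`-tabloids. -/
noncomputable def youngRep (F : Type) [Field F] (n : ℕ) (c : ℕ → ℕ) :
    Representation F (Equiv.Perm (Fin n)) (Tabloid n c →₀ F) where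
  toFun g := Finsupp.lmapDomain F F (g • ·)
  map_one' := by ext; simp
  map_mul' x y := by ext; simp [mul_smul]

/-- `ρ` is a Young module `Y^lam`: an indecomposable direct summand of `M^lam`
which is not a direct summand of any `M^mu` with `mu ⊳ lam`. -/
def IsYoungModuleFor (F : Type) [Field F] (n : ℕ) (lam : ℕ → ℕ)
    {V : Type} [AddCommGroup V] [Module F V]
    (ρ : Representation F (Equiv.Perm (Fin n)) V) : Prop :=
  IsIndecomposableRep ρ ∧ IsRepSummand (youngRep F n lam) ρ ∧
  ∀ mu : ℕ → ℕ, IsPartitionFn mu n → StrictDominates mu lam →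
    ¬ IsRepSummand (youngRep F n mu) ρ

end Young

/-! ## Orbit types, Young subgroups and related combinatorics -/

section Orbits

/-- The orbit type of a subgroup `P ≤ S_n`: the multiset of cardinalities of
the orbits of `P` on `{1,…,n}`. -/
noncomputable def orbitType (n : ℕ) (P : Subgroup (Equiv.Perm (Fin n))) : Multiset ℕ := by
  classical
  exact (Finset.univ.image fun x : Fin n => MulAction.orbit P x).val.map fun s => s.ncard

/-- The multiset of (nonempty) fiber sizes of a labelling `f : {1,…,n} → ℕ`;
the fibers of `f` are the blocks of a set partition of `{1,…,n}`. -/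
noncomputable def fiberSizes {n : ℕ} (f : Fin n → ℕ) : Multiset ℕ := by
  classical
  exact (Finset.univ.image f).val.map fun j => (Finset.univ.filter fun x => f x = j).card

/-- The subgroup of permutations preserving each fiber (block) of the
labelling `f`; for an interval labelling this is a Young subgroup. -/
def blockStabilizer (n : ℕ) (f : Fin n → ℕ) : Subgroup (Equiv.Perm (Fin n)) where
  carrier := {σ | ∀ x, f (σ x) = f x}
  one_mem' := fun _ => rfl
  mul_mem' := by
    intro a b ha hb x
    rw [Equiv.Perm.mul_apply, ha, hb]
  inv_mem' := by
    intro a ha x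
    simpa using (ha (a⁻¹ x)).symm

/-- `P` is a Sylow `p`-subgroup of the subgroup `H`. -/
def IsSylowPSubgroupIn {G : Type} [Group G] (p : ℕ) (P H : Subgroup G) : Prop :=
  P ≤ H ∧ IsPGroup p P ∧ ∀ Q : Subgroup G, IsPGroup p Q → Q ≤ H → P ≤ Q → Q = P

/-- Every member of `O` is a power of `p`. -/
def IsPPowerMultiset (p : ℕ) (O : Multiset ℕ) : Prop := ∀ x ∈ O, ∃ i : ℕ, x = p ^ i

/-- `lamE 0, …, lamE s` is the `p`-adic expansion of the partition `lam`:
each `lamE i` is a `p`-restricted partition and `lam = Σ_i p^i • lamE i`. -/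
def IsPAdicExpansionOf (p : ℕ) (lam : ℕ → ℕ) (s : ℕ) (lamE : ℕ → ℕ → ℕ) : Prop :=
  (∀ i, i ≤ s →
    (Function.support (lamE i)).Finite ∧ Antitone (lamE i) ∧ IsPRestrictedFn p (lamE i)) ∧
  ∀ j, lam j = ∑ i ∈ Finset.range (s + 1), p ^ i * lamE i j

/-- The multiset `O_lam = (1^{|lam(0)|}, p^{|lam(1)|}, …, (p^s)^{|lam(s)|})`
attached to a `p`-adic expansion. -/
noncomputable def pAdicOrbitMultiset (p s : ℕ) (lamE : ℕ → ℕ → ℕ) : Multiset ℕ :=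
  ∑ i ∈ Finset.range (s + 1), Multiset.replicate (∑ᶠ j, lamE i j) (p ^ i)

/-- `O` is a rearrangement of a refinement of `O'`: `O` is a disjoint union of
submultisets, one summing to each element of `O'`. -/
def IsRefinementRearrangement (O O' : Multiset ℕ) : Prop :=
  ∃ C : Multiset (Multiset ℕ), C.map Multiset.sum = O' ∧ C.sum = O

/-- `P` is conjugate to a subgroup of `Q`. -/
def IsConjSubgroup {G : Type} [Group G] (P Q : Subgroup G) : Prop :=
  ∃ g : G, ∀ x ∈ P, g * x * g⁻¹ ∈ Q

/-- An elementary abelian `p`-subgroup. -/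
def IsElementaryAbelian (p : ℕ) {G : Type} [Group G] (E : Subgroup G) : Prop :=
  (∀ x ∈ E, x ^ p = 1) ∧ ∀ x ∈ E, ∀ y ∈ E, x * y = y * x

/-- Every row of the tabloid `T` is a union of fibers (blocks) of `f`. -/
def rowsUnionOfFibers {n : ℕ} {c : ℕ → ℕ} (f : Fin n → ℕ) (T : Tabloid n c) : Prop :=
  ∀ j x y, f x = f y → x ∈ T.row j → y ∈ T.row j

/-- The number `m_{c,O}`: the number of `c`-tabloids each of whose rows is a
union of blocks of the set partition with labelling `f`. -/
noncomputable def mNumber (n : ℕ) (c : ℕ → ℕ) (f : Fin n → ℕ) : ℕ :=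
  Nat.card {T : Tabloid n c // rowsUnionOfFibers f T}

end Orbits

/-! ## Generic Jordan types -/

section Jordan

/-- The nilpotent Jordan block of size `p` over `K`, as an endomorphism of `K^p`. -/
def jordanShift (p : ℕ) (K : Type) [Field K] : (Fin p → K) →ₗ[K] (Fin p → K) where
  toFun v := fun i => if h : i.val + 1 < p then v ⟨i.val + 1, h⟩ else 0
  map_add' x y := by
    funext i
    by_cases h : (i : ℕ) + 1 < p <;> simp [h]
  map_smul' c x := by
    funext i
    by_cases h : (i : ℕ) + 1 < p <;> simp [h]

/-- The rational function field `F(α_1, …, α_k)`. -/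
abbrev RatFuncField (F : Type) [Field F] (k : ℕ) : Type :=
  FractionRing (MvPolynomial (Fin k) F)

/-- The operator `u_α − 1 = Σ_i α_i (ρ(g_i) − 1)` on `K ⊗_F V`, where
`K = F(α_1,…,α_k)`. -/
noncomputable def uAlphaSubOne {F : Type} [Field F] {G : Type} [Group G]
    {V : Type} [AddCommGroup V] [Module F V]
    (ρ : Representation F G V) (k : ℕ) (g : Fin k → G) :
    TensorProduct F (RatFuncField F k) V →ₗ[RatFuncField F k]
      TensorProduct F (RatFuncField F k) V :=
  ∑ i : Fin k,
    (algebraMap (MvPolynomial (Fin k) F) (RatFuncField F k) (MvPolynomial.X i)) •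
      LinearMap.baseChange (RatFuncField F k) (ρ (g i) - LinearMap.id)

end Jordan



/-! ## Auxiliary material for stmt_3 -/

section Stmt3Aux

/-- Fiber sizes of a labelling of an arbitrary finite type. -/
def fs {α : Type} [Fintype α] (f : α → ℕ) : Multiset ℕ :=
  (Finset.univ.image f).val.map fun j => (Finset.univ.filter fun x => f x = j).card

lemma fiberSizes_eq_fs {n : ℕ} (f : Fin n → ℕ) : fiberSizes f = fs f := by
  unfold fiberSizes fs
  congr!

lemma fs_empty {α : Type} [Fintype α] [IsEmpty α] (f : α → ℕ) : fs f = 0 := by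
  simp [fs]

lemma isEmpty_of_fs_eq_zero {α : Type} [Fintype α] (f : α → ℕ) (h : fs f = 0) :
    IsEmpty α := by
  by_contra hne
  rw [not_isEmpty_iff] at hne
  obtain ⟨x⟩ := hne
  have hmem : f x ∈ Finset.univ.image f := Finset.mem_image_of_mem f (Finset.mem_univ x)
  rw [fs, Multiset.map_eq_zero, Finset.val_eq_zero] at h
  rw [h] at hmem
  exact absurd hmem (Finset.notMem_empty _)

lemma fs_pos {α : Type} [Fintype α] (f : α → ℕ) : ∀ c ∈ fs f, 0 < c := by
  intro c hc
  obtain ⟨l, hl, rfl⟩ := Multiset.mem_map.mp hc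
  obtain ⟨x, _, hx⟩ := Finset.mem_image.mp (Finset.mem_val.mp hl)
  exact Finset.card_pos.mpr ⟨x, by simp [hx]⟩

lemma fiber_card_restrict {α : Type} [Fintype α] (f : α → ℕ) (j l : ℕ) (hlj : l ≠ j) :
    (Finset.univ.filter fun x : {x : α // f x ≠ j} => f x.val = l).card
      = (Finset.univ.filter fun x : α => f x = l).card := by
  rw [← Fintype.card_subtype, ← Fintype.card_subtype]
  refine Fintype.card_congr ?_
  refine (Equiv.subtypeSubtypeEquivSubtypeExists _ _).trans (Equiv.subtypeEquivRight ?_)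
  intro x
  constructor
  · rintro ⟨_, h⟩; exact h
  · intro h; exact ⟨h ▸ hlj, h⟩

lemma fs_restrict {α : Type} [Fintype α] (f : α → ℕ) (j : ℕ)
    (hj : j ∈ Finset.univ.image f) :
    fs (fun x : {x : α // f x ≠ j} => f x.val)
      = (fs f).erase ((Finset.univ.filter fun x : α => f x = j).card) := by
  have himg : Finset.univ.image (fun x : {x : α // f x ≠ j} => f x.val)
      = (Finset.univ.image f).erase j := by
    ext l
    simp only [Finset.mem_image, Finset.mem_erase, Finset.mem_univ, true_and,
      Subtype.exists]
    constructor
    · rintro ⟨x, hx, rfl⟩; exact ⟨hx, x, rfl⟩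
    · rintro ⟨hl, x, rfl⟩; exact ⟨x, hl, rfl⟩
  rw [fs, himg]
  have hmap : ((Finset.univ.image f).erase j).val.map
      (fun l => (Finset.univ.filter fun x : {x : α // f x ≠ j} => f x.val = l).card)
      = ((Finset.univ.image f).erase j).val.map
      (fun l => (Finset.univ.filter fun x : α => f x = l).card) := by
    apply Multiset.map_congr rfl
    intro l hl
    rw [Finset.mem_val, Finset.mem_erase] at hl
    exact fiber_card_restrict f j l hl.1
  rw [hmap, Finset.erase_val]
  have hjv : j ∈ (Finset.univ.image f).val := hj
  set φ := fun l => (Finset.univ.filter fun x : α => f x = l).card with hφ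
  have hcons : (Finset.univ.image f).val = j ::ₘ (Finset.univ.image f).val.erase j :=
    (Multiset.cons_erase hjv).symm
  have : fs f = φ j ::ₘ ((Finset.univ.image f).val.erase j).map φ := by
    conv_lhs => rw [fs, hcons, Multiset.map_cons]
  rw [this, Multiset.erase_cons_head]

lemma exists_equiv_of_fs_eq_aux : ∀ (N : ℕ) {α β : Type} [Fintype α] [Fintype β]
    (f : α → ℕ) (g : β → ℕ), (Finset.univ.image f).card ≤ N → fs f = fs g →
    ∃ e : α ≃ β, ∀ x y, f x = f y → g (e x) = g (e y) := by
  intro N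
  induction N with
  | zero =>
    intro α β _ _ f g hcard h
    have hα : IsEmpty α := by
      apply isEmpty_of_fs_eq_zero f
      rw [fs]
      rw [Nat.le_zero, Finset.card_eq_zero] at hcard
      simp [hcard]
    have hβ : IsEmpty β := isEmpty_of_fs_eq_zero g (by rw [← h, fs_empty])
    exact ⟨Equiv.equivOfIsEmpty α β, fun x => (hα.false x).elim⟩
  | succ N ih =>
    intro α β _ _ f g hcard h
    by_cases hα : IsEmpty α
    · have hβ : IsEmpty β := isEmpty_of_fs_eq_zero g (by rw [← h, fs_empty])
      exact ⟨Equiv.equivOfIsEmpty α β, fun x => (hα.false x).elim⟩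
    rw [not_isEmpty_iff] at hα
    obtain ⟨x₀⟩ := hα
    set j := f x₀ with hjdef
    have hj : j ∈ Finset.univ.image f := Finset.mem_image_of_mem f (Finset.mem_univ x₀)
    set c := (Finset.univ.filter fun x : α => f x = j).card with hcdef
    have hcf : c ∈ fs f := Multiset.mem_map_of_mem _ hj
    have hcg : c ∈ fs g := h ▸ hcf
    obtain ⟨l', hl', hl'c⟩ := Multiset.mem_map.mp hcg
    have hl'mem : l' ∈ Finset.univ.image g := hl'
    have hfs1 := fs_restrict f j hj
    have hfs2 := fs_restrict g l' hl'mem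
    rw [hl'c] at hfs2
    have hfseq : fs (fun x : {x : α // f x ≠ j} => f x.val)
        = fs (fun y : {y : β // g y ≠ l'} => g y.val) := by
      rw [hfs1, hfs2, h]
    have hcard' : (Finset.univ.image (fun x : {x : α // f x ≠ j} => f x.val)).card ≤ N := by
      have himg : Finset.univ.image (fun x : {x : α // f x ≠ j} => f x.val)
          = (Finset.univ.image f).erase j := by
        ext l
        simp only [Finset.mem_image, Finset.mem_erase, Finset.mem_univ, true_and,
          Subtype.exists]
        constructor
        · rintro ⟨x, hx, rfl⟩; exact ⟨hx, x, rfl⟩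
        · rintro ⟨hl, x, rfl⟩; exact ⟨x, hl, rfl⟩
      rw [himg, Finset.card_erase_of_mem hj]
      omega
    obtain ⟨e', he'⟩ := ih _ _ hcard' hfseq
    have hfib : Fintype.card {x : α // f x = j} = Fintype.card {y : β // g y = l'} := by
      rw [Fintype.card_subtype, Fintype.card_subtype, ← hcdef, hl'c]
    let eF : {x : α // f x = j} ≃ {y : β // g y = l'} := Fintype.equivOfCardEq hfib
    let e : α ≃ β := (Equiv.sumCompl (fun x => f x = j)).symm.trans
      ((eF.sumCongr e').trans (Equiv.sumCompl (fun y => g y = l')))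
    have hpos : ∀ x (hx : f x = j), e x = (eF ⟨x, hx⟩ : β) := by
      intro x hx
      show (Equiv.sumCompl (fun y => g y = l'))
        ((eF.sumCongr e') ((Equiv.sumCompl (fun x => f x = j)).symm x)) = _
      rw [Equiv.sumCompl_symm_apply_of_pos (p := fun x => f x = j) hx]
      rfl
    have hneg : ∀ x (hx : ¬ f x = j), e x = (e' ⟨x, hx⟩ : β) := by
      intro x hx
      show (Equiv.sumCompl (fun y => g y = l'))
        ((eF.sumCongr e') ((Equiv.sumCompl (fun x => f x = j)).symm x)) = _
      rw [Equiv.sumCompl_symm_apply_of_neg (p := fun x => f x = j) hx]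
      rfl
    refine ⟨e, fun x y hxy => ?_⟩
    by_cases hx : f x = j
    · have hy : f y = j := hxy ▸ hx
      rw [hpos x hx, hpos y hy, (eF ⟨x, hx⟩).2, (eF ⟨y, hy⟩).2]
    · have hy : ¬ f y = j := fun hy => hx (hxy ▸ hy)
      rw [hneg x hx, hneg y hy]
      exact he' ⟨x, hx⟩ ⟨y, hy⟩ hxy

theorem exists_equiv_of_fs_eq {α β : Type} [Fintype α] [Fintype β]
    (f : α → ℕ) (g : β → ℕ) (h : fs f = fs g) :
    ∃ e : α ≃ β, ∀ x y, f x = f y → g (e x) = g (e y) :=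
  exists_equiv_of_fs_eq_aux (Finset.univ.image f).card f g le_rfl h

lemma multiset_mem_sum {α : Type} (u : Multiset (Multiset α)) (l : α) :
    l ∈ u.sum ↔ ∃ m ∈ u, l ∈ m := by
  induction u using Multiset.induction_on with
  | empty => simp
  | cons m t ih => simp [Multiset.sum_cons, ih]

lemma multiset_split {α : Type} [DecidableEq α] (φ : α → ℕ) :
    ∀ (m : Multiset ℕ) (s : Multiset α) (r : Multiset ℕ), s.map φ = m + r →
    ∃ s₁ s₂ : Multiset α, s = s₁ + s₂ ∧ s₁.map φ = m ∧ s₂.map φ = r := by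
  intro m
  induction m using Multiset.induction_on with
  | empty => intro s r h; exact ⟨0, s, by simp, by simp, by simpa using h⟩
  | cons a m ih =>
    intro s r h
    rw [Multiset.cons_add] at h
    have ha : a ∈ s.map φ := by rw [h]; exact Multiset.mem_cons_self _ _
    obtain ⟨b, hb, hba⟩ := Multiset.mem_map.mp ha
    have hse : s = b ::ₘ s.erase b := (Multiset.cons_erase hb).symm
    have h2 : (s.erase b).map φ = m + r := by
      have : s.map φ = φ b ::ₘ (s.erase b).map φ := by rw [hse]; simp
      rw [this, hba] at h
      exact (Multiset.cons_inj_right a).mp h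
    obtain ⟨s₁, s₂, hs, h1, h2'⟩ := ih _ _ h2
    exact ⟨b ::ₘ s₁, s₂, by rw [hse, hs, Multiset.cons_add],
      by rw [Multiset.map_cons, hba, h1], h2'⟩

lemma multiset_split_sum {α : Type} [DecidableEq α] (φ : α → ℕ) :
    ∀ (C : Multiset (Multiset ℕ)) (s : Multiset α), s.map φ = C.sum →
    ∃ u : Multiset (Multiset α), u.sum = s ∧ u.map (fun t => t.map φ) = C := by
  intro C
  induction C using Multiset.induction_on with
  | empty =>
    intro s h
    simp only [Multiset.sum_zero] at h
    rw [Multiset.map_eq_zero] at h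
    exact ⟨0, by simp [h], by simp⟩
  | cons m C ih =>
    intro s h
    rw [Multiset.sum_cons] at h
    obtain ⟨s₁, s₂, hs, h1, h2⟩ := multiset_split φ m s C.sum h
    obtain ⟨u, hu1, hu2⟩ := ih s₂ h2
    exact ⟨s₁ ::ₘ u, by rw [Multiset.sum_cons, hu1, hs], by rw [Multiset.map_cons, h1, hu2]⟩

lemma exists_coarsening {α : Type} [Fintype α] (ω : α → ℕ)
    (C : Multiset (Multiset ℕ)) (hC : C.sum = fs ω) (hpos : ∀ m ∈ C, 0 < m.sum) :
    ∃ g : α → ℕ, (∀ x y, ω x = ω y → g x = g y) ∧ fs g = C.map Multiset.sum := by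
  classical
  set s : Multiset ℕ := (Finset.univ.image ω).val with hs
  set φ : ℕ → ℕ := fun l => (Finset.univ.filter fun x => ω x = l).card with hφ
  have hsmap : s.map φ = C.sum := by rw [hC]; rfl
  obtain ⟨u, husum, humap⟩ := multiset_split_sum φ C s hsmap
  have hsnodup : s.Nodup := (Finset.univ.image ω).nodup
  have hle : ∀ m ∈ u, m ≤ s := by
    intro m hm
    rw [← husum]
    conv_rhs => rw [← Multiset.cons_erase hm, Multiset.sum_cons]
    exact Multiset.le_add_right _ _
  have huniq : ∀ m ∈ u, ∀ m' ∈ u, ∀ l, l ∈ m → l ∈ m' → m = m' := by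
    intro m hm m' hm' l hl hl'
    by_contra hne
    have hm'e : m' ∈ u.erase m := (Multiset.mem_erase_of_ne (fun h => hne h.symm)).mpr hm'
    have hsum : s = m + (u.erase m).sum := by
      rw [← husum]
      conv_lhs => rw [← Multiset.cons_erase hm, Multiset.sum_cons]
    have hnd := hsnodup
    rw [hsum, Multiset.nodup_add] at hnd
    exact (Multiset.disjoint_left.mp hnd.2.2) hl ((multiset_mem_sum _ _).mpr ⟨m', hm'e, hl'⟩)
  have hne : ∀ m ∈ u, ∃ l, l ∈ m := by
    intro m hm
    have hmC : m.map φ ∈ C := humap ▸ Multiset.mem_map_of_mem _ hm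
    have := hpos _ hmC
    by_contra hno
    push_neg at hno
    have hm0 : m = 0 := Multiset.eq_zero_of_forall_notMem hno
    rw [hm0] at hmC
    have h0 := hpos _ hmC
    simp at h0
  have hex : ∀ x : α, ∃ m, m ∈ u ∧ ω x ∈ m := by
    intro x
    have hx : ω x ∈ s := Finset.mem_val.mpr (Finset.mem_image_of_mem ω (Finset.mem_univ x))
    rw [← husum] at hx
    exact (multiset_mem_sum u (ω x)).mp hx
  choose grp hgrpu hgrpin using hex
  set g : α → ℕ := fun x => Encodable.encode (grp x) with hg
  have hund : u.Nodup := by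
    rw [Multiset.nodup_iff_count_le_one]
    intro m
    by_contra hcnt
    push_neg at hcnt
    have hrep : Multiset.replicate 2 m ≤ u := Multiset.le_count_iff_replicate_le.mp hcnt
    obtain ⟨w, hw⟩ := Multiset.le_iff_exists_add.mp hrep
    have hmu : m ∈ u := Multiset.count_pos.mp (by omega)
    obtain ⟨l, hl⟩ := hne m hmu
    have : s = m + (m + w.sum) := by
      rw [← husum, hw, Multiset.sum_add, Multiset.sum_replicate, ← add_assoc]
      congr 1
      rw [two_nsmul]
    have hnd := hsnodup
    rw [this, Multiset.nodup_add] at hnd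
    exact (Multiset.disjoint_left.mp hnd.2.2) hl (Multiset.mem_add.mpr (Or.inl hl))
  refine ⟨g, ?_, ?_⟩
  · intro x y hxy
    have : grp x = grp y := huniq _ (hgrpu x) _ (hgrpu y) (ω x) (hgrpin x) (hxy ▸ hgrpin y)
    simp only [hg, this]
  · have himgg : (Finset.univ.image g) = u.toFinset.image (fun m => Encodable.encode m) := by
      ext i
      simp only [Finset.mem_image, Finset.mem_univ, true_and, Multiset.mem_toFinset]
      constructor
      · rintro ⟨x, rfl⟩; exact ⟨grp x, hgrpu x, rfl⟩
      · rintro ⟨m, hm, rfl⟩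
        obtain ⟨l, hl⟩ := hne m hm
        have hls : l ∈ s := Multiset.mem_of_le (hle m hm) hl
        obtain ⟨x, _, hx⟩ := Finset.mem_image.mp (Finset.mem_val.mp hls)
        have hgx : grp x = m := huniq _ (hgrpu x) _ hm (ω x) (hgrpin x) (hx ▸ hl)
        exact ⟨x, by rw [hg]; simp only [hgx]⟩
    have hval : (u.toFinset.image (fun m => Encodable.encode m)).val
        = u.map (fun m => Encodable.encode m) := by
      rw [Finset.image_val, Multiset.toFinset_val, Multiset.dedup_eq_self.mpr hund,
        Multiset.dedup_eq_self]
      exact Multiset.Nodup.map Encodable.encode_injective hund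
    have hfib : ∀ m ∈ u, (Finset.univ.filter fun x => g x = Encodable.encode m).card
        = (m.map φ).sum := by
      intro m hm
      have hmnd : m.Nodup := Multiset.nodup_of_le (hle m hm) hsnodup
      have hfilter : (Finset.univ.filter fun x => g x = Encodable.encode m)
          = m.toFinset.biUnion (fun l => Finset.univ.filter fun x => ω x = l) := by
        ext x
        simp only [Finset.mem_filter, Finset.mem_univ, true_and, Finset.mem_biUnion,
          Multiset.mem_toFinset]
        constructor
        · intro hx
          have hgx : grp x = m := Encodable.encode_injective hx
          exact ⟨ω x, hgx ▸ hgrpin x, rfl⟩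
        · rintro ⟨l, hl, hxl⟩
          have hgx : grp x = m := huniq _ (hgrpu x) _ hm (ω x) (hgrpin x) (hxl ▸ hl)
          show Encodable.encode (grp x) = Encodable.encode m
          rw [hgx]
      rw [hfilter, Finset.card_biUnion]
      · show ∑ l ∈ m.toFinset, φ l = (m.map φ).sum
        rw [Finset.sum]
        congr 1
        rw [Multiset.toFinset_val, Multiset.dedup_eq_self.mpr hmnd]
      · intro l _ l' _ hll'
        rw [Function.onFun, Finset.disjoint_left]
        intro x hx hx'
        simp only [Finset.mem_filter] at hx hx'
        exact hll' (hx.2 ▸ hx'.2 ▸ rfl)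
    rw [fs, himgg, hval, Multiset.map_map, ← humap, Multiset.map_map]
    apply Multiset.map_congr rfl
    intro m hm
    exact hfib m hm

lemma refinement_of_coarsening {α : Type} [Fintype α] (ω g : α → ℕ)
    (hc : ∀ x y, ω x = ω y → g x = g y) :
    IsRefinementRearrangement (fs ω) (fs g) := by
  classical
  set φ : ℕ → ℕ := fun l => (Finset.univ.filter fun x => ω x = l).card with hφ
  set img : ℕ → Finset ℕ := fun j => (Finset.univ.filter fun x => g x = j).image ω with himg
  refine ⟨(Finset.univ.image g).val.map (fun j => (img j).val.map φ), ?_, ?_⟩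
  · rw [Multiset.map_map, fs]
    apply Multiset.map_congr rfl
    intro j hj
    show ((img j).val.map φ).sum = _
    have hsplit : (Finset.univ.filter fun x => g x = j)
        = (img j).biUnion (fun l => Finset.univ.filter fun x => ω x = l) := by
      ext x
      simp only [Finset.mem_filter, Finset.mem_univ, true_and, Finset.mem_biUnion, himg,
        Finset.mem_image]
      constructor
      · intro hx
        exact ⟨ω x, ⟨x, by simp [hx]⟩, rfl⟩
      · rintro ⟨l, ⟨x₀, hx₀, rfl⟩, hxl⟩
        rw [hc x x₀ hxl]
        exact hx₀
    rw [hsplit, Finset.card_biUnion]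
    · rw [Finset.sum]
    · intro l _ l' _ hll'
      rw [Function.onFun, Finset.disjoint_left]
      intro x hx hx'
      simp only [Finset.mem_filter] at hx hx'
      exact hll' (hx.2 ▸ hx'.2 ▸ rfl)
  · have hjoin : ((Finset.univ.image g).val.map (fun j => (img j).val.map φ)).sum
        = ((Finset.univ.image g).val.bind (fun j => (img j).val)).map φ := by
      rw [Multiset.map_bind]
      rfl
    rw [hjoin, fs]
    congr 1
    have hnd1 : ((Finset.univ.image g).val.bind (fun j => (img j).val)).Nodup := by
      rw [Multiset.nodup_bind]
      refine ⟨fun j _ => (img j).nodup, ?_⟩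
      apply Multiset.Nodup.pairwise ?_ (Finset.univ.image g).nodup
      intro j _ k _ hjk
      rw [Function.onFun, Multiset.disjoint_left]
      intro l hl hl'
      obtain ⟨x, hx, hxl⟩ := Finset.mem_image.mp (Finset.mem_val.mp hl)
      obtain ⟨x', hx', hxl'⟩ := Finset.mem_image.mp (Finset.mem_val.mp hl')
      rw [Finset.mem_filter] at hx hx'
      exact hjk (hx.2 ▸ hx'.2 ▸ hc x x' (hxl.trans hxl'.symm))
    rw [Multiset.Nodup.ext hnd1 (Finset.univ.image ω).nodup]
    intro l
    rw [Multiset.mem_bind]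
    constructor
    · rintro ⟨j, _, hl⟩
      obtain ⟨x, _, hxl⟩ := Finset.mem_image.mp (Finset.mem_val.mp hl)
      exact Finset.mem_val.mpr (hxl ▸ Finset.mem_image_of_mem ω (Finset.mem_univ x))
    · intro hl
      obtain ⟨x, _, hxl⟩ := Finset.mem_image.mp (Finset.mem_val.mp hl)
      refine ⟨g x, Finset.mem_val.mpr (Finset.mem_image_of_mem g (Finset.mem_univ x)), ?_⟩
      rw [himg]
      exact Finset.mem_val.mpr (Finset.mem_image.mpr ⟨x, Finset.mem_filter.mpr
        ⟨Finset.mem_univ x, rfl⟩, hxl⟩)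

lemma fs_comp_equiv {α β : Type} [Fintype α] [Fintype β] (f : α → ℕ) (e : β ≃ α) :
    fs (fun y => f (e y)) = fs f := by
  classical
  unfold fs
  have himg : Finset.univ.image (fun y => f (e y)) = Finset.univ.image f := by
    ext j
    simp only [Finset.mem_image, Finset.mem_univ, true_and]
    exact ⟨fun ⟨y, hy⟩ => ⟨e y, hy⟩, fun ⟨x, hx⟩ => ⟨e.symm x, by simpa using hx⟩⟩
  rw [himg]
  apply Multiset.map_congr rfl
  intro j _
  rw [← Fintype.card_subtype, ← Fintype.card_subtype]
  exact Fintype.card_congr (e.subtypeEquiv (fun y => Iff.rfl))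

lemma fs_orbitType {n : ℕ} (P : Subgroup (Equiv.Perm (Fin n)))
    (ι : Set (Fin n) → ℕ) (hι : Function.Injective ι) :
    fs (fun x => ι (MulAction.orbit P x)) = orbitType n P := by
  classical
  unfold fs orbitType
  have himg : Finset.univ.image (fun x => ι (MulAction.orbit P x))
      = (Finset.univ.image fun x : Fin n => MulAction.orbit P x).image ι := by
    rw [Finset.image_image]
    rfl
  rw [himg, Finset.image_val, Multiset.dedup_eq_self.mpr
    (Multiset.Nodup.map hι (Finset.univ.image fun x : Fin n => MulAction.orbit P x).nodup),
    Multiset.map_map]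
  have : ((Finset.univ.image fun x : Fin n => MulAction.orbit P x).val.map
      ((fun j => (Finset.univ.filter fun x => ι (MulAction.orbit P x) = j).card) ∘ ι))
      = (Finset.univ.image fun x : Fin n => MulAction.orbit P x).val.map
        (fun s => s.ncard) := by
    apply Multiset.map_congr rfl
    intro S hS
    obtain ⟨x₀, _, rfl⟩ := Finset.mem_image.mp (Finset.mem_val.mp hS)
    show (Finset.univ.filter fun x => ι (MulAction.orbit P x) = ι (MulAction.orbit P x₀)).card
      = (MulAction.orbit P x₀).ncard
    have hfilt : (Finset.univ.filter fun x =>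
        ι (MulAction.orbit P x) = ι (MulAction.orbit P x₀))
        = Finset.univ.filter (fun x => x ∈ MulAction.orbit P x₀) := by
      ext x
      simp only [Finset.mem_filter, Finset.mem_univ, true_and]
      constructor
      · intro h
        rw [← MulAction.orbit_eq_iff]
        exact hι h
      · intro h
        rw [MulAction.orbit_eq_iff.mpr h]
    rw [hfilt, ← Set.ncard_coe_finset]
    congr 1
    ext x
    simp
  rw [this]

theorem bridge {G : Type} [Group G] [Finite G] (p : ℕ) [Fact p.Prime]
    (P H Plam : Subgroup G) (hP : IsPGroup p P)
    (hPlam : IsSylowPSubgroupIn p Plam H) :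
    (∃ g : G, ∀ x ∈ P, g * x * g⁻¹ ∈ H) ↔ IsConjSubgroup P Plam := by
  obtain ⟨hle, hpg, hmax⟩ := hPlam
  constructor
  · rintro ⟨σ, hσ⟩
    -- R' = Plam.subgroupOf H is a Sylow p-subgroup of H
    obtain ⟨S, hS⟩ := (hpg.comap_subtype (K := H)).exists_le_sylow
    have hSP : Subgroup.map H.subtype S.toSubgroup = Plam := by
      apply hmax
      · exact S.2.map _
      · rintro x ⟨y, _, rfl⟩; exact y.2
      · intro x hx
        exact ⟨⟨x, hle hx⟩, hS (Subgroup.mem_subgroupOf.mpr hx), rfl⟩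
    -- the conjugate of P sits in some Sylow S₂ of H
    have hQpg : IsPGroup p ((P.map (MulAut.conj σ).toMonoidHom).comap H.subtype) :=
      (hP.map _).comap_subtype
    obtain ⟨S₂, hS₂⟩ := hQpg.exists_le_sylow
    obtain ⟨h, hh⟩ := MulAction.exists_smul_eq H S₂ S
    refine ⟨(h : G) * σ, fun x hx => ?_⟩
    have hxH : σ * x * σ⁻¹ ∈ H := hσ x hx
    have hmem : (⟨σ * x * σ⁻¹, hxH⟩ : H) ∈ S₂ := by
      apply hS₂
      simp only [Subgroup.mem_comap, Subgroup.coe_subtype]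
      exact ⟨x, hx, rfl⟩
    have hmem2 : h * (⟨σ * x * σ⁻¹, hxH⟩ : H) * h⁻¹ ∈ S := by
      rw [← hh]
      exact ⟨⟨σ * x * σ⁻¹, hxH⟩, hmem, rfl⟩
    have : ((h : G) * (σ * x * σ⁻¹) * (h : G)⁻¹) ∈ Plam := by
      rw [← hSP]
      exact ⟨_, hmem2, rfl⟩
    convert this using 1
    group
  · rintro ⟨g, hg⟩
    exact ⟨g, fun x hx => hle (hg x hx)⟩

end Stmt3Aux

/-- `O` is a rearrangement of a refinement of `O_lam` iff `P` is
conjugate to a subgroup of `P_lam`. -/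
theorem stmt_3 (p : ℕ) [Fact p.Prime]
    (n : ℕ) (lam : ℕ → ℕ) (hlam : IsPartitionFn lam n)
    (s : ℕ) (lamE : ℕ → ℕ → ℕ) (hexp : IsPAdicExpansionOf p lam s lamE)
    (O : Multiset ℕ) (hO : IsPPowerMultiset p O) (hOsum : O.sum = n)
    (P : Subgroup (Equiv.Perm (Fin n))) (hP : IsPGroup p P)
    (horb : orbitType n P = O)
    (f : Fin n → ℕ) (hf : fiberSizes f = pAdicOrbitMultiset p s lamE)
    (Plam : Subgroup (Equiv.Perm (Fin n)))
    (hPlam : IsSylowPSubgroupIn p Plam (blockStabilizer n f)) :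
    IsRefinementRearrangement O (pAdicOrbitMultiset p s lamE) ↔ IsConjSubgroup P Plam := by
  classical
  subst horb
  rw [← hf]
  rw [← bridge p P (blockStabilizer n f) Plam hP hPlam]
  obtain ⟨ι, hι⟩ := Countable.exists_injective_nat (Set (Fin n))
  set ω : Fin n → ℕ := fun x => ι (MulAction.orbit P x) with hω
  have hfsω : fs ω = orbitType n P := fs_orbitType P ι hι
  have hfib : fiberSizes f = fs f := fiberSizes_eq_fs f
  constructor
  · rintro ⟨C, hC1, hC2⟩
    have hpos : ∀ m ∈ C, 0 < m.sum := by
      intro m hm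
      apply fs_pos f
      rw [← hfib, ← hC1]
      exact Multiset.mem_map_of_mem _ hm
    obtain ⟨g, hg1, hg2⟩ := exists_coarsening ω C (by rw [hfsω]; exact hC2) hpos
    obtain ⟨e, he⟩ := exists_equiv_of_fs_eq g f (by rw [hg2, hC1, hfib])
    refine ⟨e, fun π hπ => ?_⟩
    show ∀ y, f ((e * π * e⁻¹) y) = f y
    intro y
    have horb' : ω (π (e.symm y)) = ω (e.symm y) := by
      show ι (MulAction.orbit P (π (e.symm y))) = ι (MulAction.orbit P (e.symm y))
      congr 1
      have hsm : π (e.symm y) = (⟨π, hπ⟩ : P) • (e.symm y) := rfl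
      rw [hsm, MulAction.orbit_smul]
    have h1 := he _ _ (hg1 _ _ horb')
    calc f ((e * π * e⁻¹) y) = f (e (π (e.symm y))) := by
          simp [Equiv.Perm.mul_apply, Equiv.Perm.inv_def]
      _ = f (e (e.symm y)) := h1
      _ = f y := by simp
  · rintro ⟨σ, hσ⟩
    have hcoars : ∀ x y, ω x = ω y → f (σ x) = f (σ y) := by
      intro x y hxy
      have horb2 : MulAction.orbit P x = MulAction.orbit P y := hι hxy
      have hy : y ∈ MulAction.orbit P x := by
        rw [horb2]; exact MulAction.mem_orbit_self y
      obtain ⟨⟨π, hπ⟩, hπx⟩ := hy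
      have hb : ∀ z, f ((σ * π * σ⁻¹) z) = f z := hσ π hπ
      have hb2 := hb (σ x)
      have hmul : (σ * π * σ⁻¹) (σ x) = σ (π x) := by
        simp [Equiv.Perm.mul_apply]
      rw [hmul] at hb2
      have hπx' : π x = y := hπx
      rw [hπx'] at hb2
      exact hb2.symm
    obtain ⟨C, hC1, hC2⟩ := refinement_of_coarsening ω (fun x => f (σ x)) hcoars
    refine ⟨C, ?_, by rw [hC2, hfsω]⟩
    rw [hC1, hfib]
    exact fs_comp_equiv f σ
end

section
/- Let λ be a partition of m with second part λ_2 (set λ_2 = 0 if λ has fewer than two parts), let O be a multiset of powers of p summing to m, let O' be a multiset of powers of p summing to n, and let s be a nonnegative integer with p^s > λ_2. Then m_{λ + (p^s n), O''} = m_{λ, O}, where λ + (p^s n) is the partition of m + p^s n obtained from λ by adding p^s n to its first part, and O'' is the multiset union of O and the multiset obtained by multiplying every element of O' by p^s. -/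
open scoped BigOperators

section Helpers

private lemma split_map_eq_add (g : ℕ → ℕ) :
    ∀ (A B w : Multiset ℕ), w.map g = A + B →
      ∃ u v : Multiset ℕ, u + v = w ∧ u.map g = A ∧ v.map g = B := by
  intro A
  induction A using Multiset.induction_on with
  | empty => intro B w h; exact ⟨0, w, by simp, by simp, by simpa using h⟩
  | cons a A ih =>
    intro B w h
    have ha : a ∈ w.map g := by rw [h]; simp
    obtain ⟨x, hx, hgx⟩ := Multiset.mem_map.mp ha
    have hw : w = x ::ₘ w.erase x := (Multiset.cons_erase hx).symm
    have h2 : (w.erase x).map g = A + B := by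
      have h3 : g x ::ₘ (w.erase x).map g = a ::ₘ (A + B) := by
        rw [← Multiset.map_cons, ← hw, h]; simp [Multiset.cons_add]
      rw [hgx] at h3
      exact (Multiset.cons_inj_right a).mp h3
    obtain ⟨u, v, huv, hu, hv⟩ := ih B (w.erase x) h2
    exact ⟨x ::ₘ u, v, by rw [Multiset.cons_add, huv, ← hw], by simp [hu, hgx], hv⟩

private lemma match_map_eq (F G : ℕ → ℕ) :
    ∀ (s : Finset ℕ) (u : Multiset ℕ), u.Nodup → s.val.map F = u.map G →
      ∃ φ : ℕ → ℕ, Set.InjOn φ ↑s ∧ ∀ x ∈ s, φ x ∈ u ∧ G (φ x) = F x := by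
  intro s
  induction s using Finset.induction_on with
  | empty => intro u _ _; exact ⟨id, by simp, by simp⟩
  | @insert a s ha ih =>
    intro u hnd h
    rw [Finset.insert_val_of_notMem ha, Multiset.map_cons] at h
    have hFa : F a ∈ u.map G := by rw [← h]; simp
    obtain ⟨b, hb, hGb⟩ := Multiset.mem_map.mp hFa
    have hu : u = b ::ₘ u.erase b := (Multiset.cons_erase hb).symm
    have h2 : s.val.map F = (u.erase b).map G := by
      have h3 : Multiset.map G u = G b ::ₘ (u.erase b).map G := by
        conv_lhs => rw [hu, Multiset.map_cons]
      rw [h3, hGb] at h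
      exact (Multiset.cons_inj_right (F a)).mp h
    obtain ⟨φ', hinj, hφ'⟩ := ih (u.erase b) (hnd.erase b) h2
    have hbe : b ∉ u.erase b := fun hc => ((hnd.mem_erase_iff).mp hc).1 rfl
    refine ⟨fun x => if x = a then b else φ' x, ?_, ?_⟩
    · intro x hx y hy hxy
      simp only [Finset.coe_insert, Set.mem_insert_iff, Finset.mem_coe] at hx hy
      dsimp only at hxy
      rcases hx with rfl | hx <;> rcases hy with rfl | hy
      · rfl
      · have hya : y ≠ x := fun hc => ha (hc ▸ hy)
        rw [if_pos rfl, if_neg hya] at hxy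
        exact absurd (hxy ▸ (hφ' y hy).1) hbe
      · have hxa : x ≠ y := fun hc => ha (hc ▸ hx)
        rw [if_pos rfl, if_neg hxa] at hxy
        exact absurd (hxy ▸ (hφ' x hx).1) hbe
      · have hxa : x ≠ a := fun hc => ha (hc ▸ hx)
        have hya : y ≠ a := fun hc => ha (hc ▸ hy)
        rw [if_neg hxa, if_neg hya] at hxy
        exact hinj hx hy hxy
    · intro x hx
      rcases Finset.mem_insert.mp hx with rfl | hx
      · simp [hb, hGb]
      · have hxa : x ≠ a := fun hc => ha (hc ▸ hx)
        simp only [if_neg hxa]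
        exact ⟨Multiset.mem_of_mem_erase (hφ' x hx).1, (hφ' x hx).2⟩

/-- The rows of the image tabloid: everything in `Nb` goes to row 0. -/
private noncomputable def rowFwd {m M : ℕ} {lam : ℕ → ℕ} (e : Fin m → Fin M)
    (Nb : Finset (Fin M)) (T : Tabloid m lam) (j : ℕ) : Finset (Fin M) :=
  if j = 0 then (T.row 0).image e ∪ Nb else (T.row j).image e

end Helpers

set_option maxHeartbeats 1000000 in
/-- `m_{lam + (p^s n), O''} = m_{lam, O}` when `p^s > lam_2`. -/
theorem stmt_15 (p : ℕ) [Fact p.Prime] (m n s : ℕ)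
    (lam : ℕ → ℕ) (hlam : IsPartitionFn lam m) (hs : lam 1 < p ^ s)
    (O O' : Multiset ℕ) (hO : IsPPowerMultiset p O) (hO' : IsPPowerMultiset p O')
    (hOm : O.sum = m) (hOn : O'.sum = n)
    (f1 : Fin m → ℕ) (hf1 : fiberSizes f1 = O)
    (f3 : Fin (m + p ^ s * n) → ℕ)
    (hf3 : fiberSizes f3 = O + O'.map (fun x => p ^ s * x)) :
    mNumber (m + p ^ s * n)
        (fun j => if j = 0 then lam 0 + p ^ s * n else lam j) f3
      = mNumber m lam f1 := by
  classical
  have hp : 0 < p := (Fact.out : p.Prime).pos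
  -- unfold fiberSizes
  have hf3' : (Finset.univ.image f3).val.map
      (fun j => (Finset.univ.filter fun x => f3 x = j).card)
      = O + O'.map (fun x => p ^ s * x) := hf3
  have hf1' : (Finset.univ.image f1).val.map
      (fun j => (Finset.univ.filter fun x => f1 x = j).card) = O := hf1
  set sz3 : ℕ → ℕ := fun j => (Finset.univ.filter fun x => f3 x = j).card with hsz3
  set sz1 : ℕ → ℕ := fun j => (Finset.univ.filter fun x => f1 x = j).card with hsz1
  obtain ⟨u, v, huv, hu, hv⟩ := split_map_eq_add sz3 O (O'.map fun x => p ^ s * x)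
    (Finset.univ.image f3).val hf3'
  have hnd : (u + v).Nodup := by rw [huv]; exact (Finset.univ.image f3).nodup
  have hndu : u.Nodup := (Multiset.nodup_add.mp hnd).1
  have hndv : v.Nodup := (Multiset.nodup_add.mp hnd).2.1
  have hdisjuv : ∀ j, j ∈ u → j ∉ v :=
    fun j hj hjv => Multiset.disjoint_left.mp (Multiset.nodup_add.mp hnd).2.2 hj hjv
  have hmem3 : ∀ x : Fin (m + p ^ s * n), f3 x ∈ u + v := by
    intro x; rw [huv]
    exact Finset.mem_def.mp (Finset.mem_image_of_mem f3 (Finset.mem_univ x))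
  have hxor : ∀ x : Fin (m + p ^ s * n), (f3 x ∈ u ∧ f3 x ∉ v) ∨ (f3 x ∈ v ∧ f3 x ∉ u) := by
    intro x
    rcases Multiset.mem_add.mp (hmem3 x) with h | h
    · exact Or.inl ⟨h, fun hc => hdisjuv _ h hc⟩
    · exact Or.inr ⟨h, fun hc => hdisjuv _ hc h⟩
  have hbig : ∀ j ∈ v, p ^ s ≤ sz3 j := by
    intro j hj
    have hmem : sz3 j ∈ O'.map (fun x => p ^ s * x) := hv ▸ Multiset.mem_map_of_mem sz3 hj
    obtain ⟨x, hx, hxe⟩ := Multiset.mem_map.mp hmem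
    obtain ⟨i, rfl⟩ := hO' x hx
    calc p ^ s = p ^ s * 1 := (mul_one _).symm
    _ ≤ p ^ s * p ^ i := Nat.mul_le_mul_left _ (Nat.one_le_pow _ _ hp)
    _ = sz3 j := hxe
  -- the finsets of "old" and "new" points
  set Nc : Finset (Fin (m + p ^ s * n)) := Finset.univ.filter (fun x => f3 x ∈ u) with hNcdef
  set Nb : Finset (Fin (m + p ^ s * n)) := Finset.univ.filter (fun x => f3 x ∈ v) with hNbdef
  have hcardfilt : ∀ w : Multiset ℕ, w.Nodup →
      (Finset.univ.filter (fun x : Fin (m + p ^ s * n) => f3 x ∈ w)).card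
        = (w.map sz3).sum := by
    intro w hw
    have heq : Finset.univ.filter (fun x : Fin (m + p ^ s * n) => f3 x ∈ w)
        = (⟨w, hw⟩ : Finset ℕ).biUnion (fun j => Finset.univ.filter fun x => f3 x = j) := by
      ext x
      simp only [Finset.mem_filter, Finset.mem_biUnion, Finset.mem_univ, true_and]
      constructor
      · intro hxw; exact ⟨f3 x, hxw, rfl⟩
      · rintro ⟨j, hj, rfl⟩; exact hj
    rw [heq, Finset.card_biUnion]
    · exact Finset.sum_eq_multiset_sum _ sz3
    · intro a _ b _ hab
      refine Finset.disjoint_left.mpr ?_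
      rintro x hx hx'
      exact hab ((Finset.mem_filter.mp hx).2 ▸ (Finset.mem_filter.mp hx').2 ▸ rfl)
  have hNccard : Nc.card = m := by
    rw [hNcdef, hcardfilt u hndu, hu, hOm]
  have hNbcard : Nb.card = p ^ s * n := by
    rw [hNbdef, hcardfilt v hndv, hv]
    have hgen : ∀ t : Multiset ℕ, (t.map fun x => p ^ s * x).sum = p ^ s * t.sum := by
      intro t
      induction t using Multiset.induction_on with
      | empty => simp
      | cons a t ih => simp [ih, Nat.mul_add]
    rw [hgen, hOn]
  -- the matching of fibers
  obtain ⟨φ, hφinj, hφ⟩ := match_map_eq sz1 sz3 (Finset.univ.image f1) u hndu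
    (by rw [hf1', ← hu])
  have hmemim : ∀ x : Fin m, f1 x ∈ Finset.univ.image f1 :=
    fun x => Finset.mem_image_of_mem f1 (Finset.mem_univ x)
  have hcards : ∀ j, j ∈ Finset.univ.image f1 →
      (Finset.univ.filter fun y : Fin m => f1 y = j).card
        = (Finset.univ.filter fun y : Fin (m + p ^ s * n) => f3 y = φ j).card :=
    fun j hj => ((hφ j hj).2).symm
  let E : ∀ j : ℕ, j ∈ Finset.univ.image f1 →
      ((Finset.univ.filter fun y : Fin m => f1 y = j : Finset (Fin m)) ≃
        (Finset.univ.filter fun y : Fin (m + p ^ s * n) => f3 y = φ j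
          : Finset (Fin (m + p ^ s * n)))) :=
    fun j hj => Finset.equivOfCardEq (hcards j hj)
  have hmemfib : ∀ x : Fin m, x ∈ Finset.univ.filter fun y : Fin m => f1 y = f1 x :=
    fun x => Finset.mem_filter.mpr ⟨Finset.mem_univ x, rfl⟩
  let e : Fin m → Fin (m + p ^ s * n) :=
    fun x => ↑(E (f1 x) (hmemim x) ⟨x, hmemfib x⟩)
  have he3 : ∀ x, f3 (e x) = φ (f1 x) :=
    fun x => (Finset.mem_filter.mp (E (f1 x) (hmemim x) ⟨x, hmemfib x⟩).2).2
  have haux : ∀ (j : ℕ) (hj : j ∈ Finset.univ.image f1) (x : Fin m) (hx : f1 x = j),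
      e x = ↑(E j hj ⟨x, Finset.mem_filter.mpr ⟨Finset.mem_univ x, hx⟩⟩) := by
    intro j hj x hx
    subst hx
    rfl
  have heinj : Function.Injective e := by
    intro x y hxy
    have h1 : φ (f1 x) = φ (f1 y) := by rw [← he3 x, ← he3 y, hxy]
    have h2 : f1 x = f1 y :=
      hφinj (Finset.mem_coe.mpr (hmemim x)) (Finset.mem_coe.mpr (hmemim y)) h1
    rw [haux (f1 x) (hmemim x) x rfl, haux (f1 x) (hmemim x) y h2.symm] at hxy
    have h3 := (E (f1 x) (hmemim x)).injective (Subtype.coe_injective hxy)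
    exact congrArg Subtype.val h3
  have heS : ∀ x : Fin m, f3 (e x) ∈ u := by
    intro x; rw [he3 x]; exact (hφ (f1 x) (hmemim x)).1
  have herange : Finset.univ.image e = Nc := by
    apply Finset.eq_of_subset_of_card_le
    · intro z hz
      obtain ⟨x, _, rfl⟩ := Finset.mem_image.mp hz
      exact Finset.mem_filter.mpr ⟨Finset.mem_univ _, heS x⟩
    · rw [hNccard, Finset.card_image_of_injective _ heinj, Finset.card_univ,
        Fintype.card_fin]
  have hdisjIm : ∀ A : Finset (Fin m), Disjoint (A.image e) Nb := by
    intro A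
    refine Finset.disjoint_left.mpr ?_
    intro z hz hz'
    obtain ⟨x, _, rfl⟩ := Finset.mem_image.mp hz
    exact hdisjuv _ (heS x) ((Finset.mem_filter.mp hz').2)
  -- properties of the forward row map
  have hdisjF : ∀ T : Tabloid m lam, ∀ i j, i ≠ j →
      Disjoint (rowFwd e Nb T i) (rowFwd e Nb T j) := by
    intro T i j hij
    have hd := (Finset.disjoint_image heinj).mpr (T.disj i j hij)
    by_cases hi : i = 0
    · subst hi
      have hj : j ≠ 0 := fun h => hij h.symm
      simp only [rowFwd, if_pos rfl, if_neg hj]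
      exact Finset.disjoint_union_left.mpr ⟨hd, (hdisjIm _).symm⟩
    · by_cases hjj : j = 0
      · subst hjj
        simp only [rowFwd, if_neg hi, if_pos rfl]
        exact Finset.disjoint_union_right.mpr ⟨hd, hdisjIm _⟩
      · simp only [rowFwd, if_neg hi, if_neg hjj]; exact hd
  have hcardF : ∀ T : Tabloid m lam, ∀ j, (rowFwd e Nb T j).card
      = if j = 0 then lam 0 + p ^ s * n else lam j := by
    intro T j
    by_cases hj : j = 0
    · subst hj
      simp only [rowFwd, eq_self_iff_true, if_true]
      rw [Finset.card_union_of_disjoint (hdisjIm _),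
        Finset.card_image_of_injective _ heinj, T.card_row, hNbcard]
    · simp only [rowFwd, if_neg hj]
      rw [Finset.card_image_of_injective _ heinj, T.card_row]
  have hcoverF : ∀ T : Tabloid m lam, ∀ x : Fin (m + p ^ s * n), ∃ j, x ∈ rowFwd e Nb T j := by
    intro T x
    rcases hxor x with ⟨h1, _⟩ | ⟨h1, _⟩
    · have hx : x ∈ Finset.univ.image e :=
        herange ▸ Finset.mem_filter.mpr ⟨Finset.mem_univ x, h1⟩
      obtain ⟨y, _, rfl⟩ := Finset.mem_image.mp hx
      obtain ⟨j, hj⟩ := T.cover y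
      refine ⟨j, ?_⟩
      by_cases hj0 : j = 0
      · subst hj0
        simp only [rowFwd, eq_self_iff_true, if_true]
        exact Finset.mem_union_left _ (Finset.mem_image_of_mem e hj)
      · simp only [rowFwd, if_neg hj0]
        exact Finset.mem_image_of_mem e hj
    · refine ⟨0, ?_⟩
      simp only [rowFwd, eq_self_iff_true, if_true]
      exact Finset.mem_union_right _ (Finset.mem_filter.mpr ⟨Finset.mem_univ x, h1⟩)
  have hkey : ∀ T : Tabloid m lam, rowsUnionOfFibers f1 T →
      ∀ j (x y : Fin (m + p ^ s * n)), f3 x = f3 y →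
        x ∈ (T.row j).image e → y ∈ (T.row j).image e := by
    intro T hT j x y hxy hx
    obtain ⟨x', hx', rfl⟩ := Finset.mem_image.mp hx
    have hyS : f3 y ∈ u := hxy ▸ heS x'
    have hy : y ∈ Finset.univ.image e :=
      herange ▸ Finset.mem_filter.mpr ⟨Finset.mem_univ y, hyS⟩
    obtain ⟨y', _, rfl⟩ := Finset.mem_image.mp hy
    have hf1eq : f1 x' = f1 y' :=
      hφinj (Finset.mem_coe.mpr (hmemim x')) (Finset.mem_coe.mpr (hmemim y'))
        (by rw [← he3 x', ← he3 y', hxy])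
    exact Finset.mem_image_of_mem e (hT j x' y' hf1eq hx')
  have hrUF : ∀ T : Tabloid m lam, rowsUnionOfFibers f1 T →
      ∀ j (x y : Fin (m + p ^ s * n)), f3 x = f3 y →
        x ∈ rowFwd e Nb T j → y ∈ rowFwd e Nb T j := by
    intro T hT j x y hxy hx
    by_cases hj : j = 0
    · subst hj
      simp only [rowFwd, eq_self_iff_true, if_true] at hx ⊢
      rcases Finset.mem_union.mp hx with hx | hx
      · exact Finset.mem_union_left _ (hkey T hT 0 x y hxy hx)
      · have hyv : f3 y ∈ v := hxy ▸ (Finset.mem_filter.mp hx).2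
        exact Finset.mem_union_right _ (Finset.mem_filter.mpr ⟨Finset.mem_univ y, hyv⟩)
    · simp only [rowFwd, if_neg hj] at hx ⊢
      exact hkey T hT j x y hxy hx
  -- the bijection
  show Nat.card {T : Tabloid (m + p ^ s * n)
        (fun j => if j = 0 then lam 0 + p ^ s * n else lam j) // rowsUnionOfFibers f3 T}
      = Nat.card {T : Tabloid m lam // rowsUnionOfFibers f1 T}
  refine (Nat.card_congr (Equiv.ofBijective
    (fun T => (⟨⟨rowFwd e Nb T.1, hdisjF T.1, hcardF T.1, hcoverF T.1⟩,
      fun j x y hxy hx => hrUF T.1 T.2 j x y hxy hx⟩ :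
        {T : Tabloid (m + p ^ s * n)
          (fun j => if j = 0 then lam 0 + p ^ s * n else lam j) //
            rowsUnionOfFibers f3 T}))
    ⟨?_, ?_⟩)).symm
  · -- injective
    intro T1 T2 h
    have h' : ∀ j, rowFwd e Nb T1.1 j = rowFwd e Nb T2.1 j :=
      fun j => congrFun (congrArg Tabloid.row (congrArg Subtype.val h)) j
    apply Subtype.ext
    apply Tabloid.ext'
    funext j
    apply Finset.image_injective heinj
    by_cases hj : j = 0
    · subst hj
      have h0 := h' 0
      simp only [rowFwd, eq_self_iff_true, if_true] at h0
      calc (T1.1.row 0).image e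
          = ((T1.1.row 0).image e ∪ Nb) \ Nb :=
            (Finset.union_sdiff_cancel_right (hdisjIm _)).symm
        _ = ((T2.1.row 0).image e ∪ Nb) \ Nb := by rw [h0]
        _ = (T2.1.row 0).image e := Finset.union_sdiff_cancel_right (hdisjIm _)
    · have hjj := h' j
      simp only [rowFwd, if_neg hj] at hjj
      exact hjj
  · -- surjective
    rintro ⟨U, hU⟩
    have hrow' : ∀ j, j ≠ 0 → ∀ x ∈ U.row j, f3 x ∈ u := by
      intro j hj x hx
      rcases hxor x with ⟨h1, _⟩ | ⟨h1, _⟩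
      · exact h1
      · exfalso
        have hfib : (Finset.univ.filter fun y => f3 y = f3 x) ⊆ U.row j := by
          intro y hy
          exact hU j x y ((Finset.mem_filter.mp hy).2).symm hx
        have hle : sz3 (f3 x) ≤ lam j := by
          have h2 := Finset.card_le_card hfib
          rw [U.card_row] at h2
          simpa [if_neg hj] using h2
        have h1s : p ^ s ≤ sz3 (f3 x) := hbig _ h1
        have h2s : lam j ≤ lam 1 := hlam.2 (by omega : 1 ≤ j)
        omega
    have hNbrow0 : Nb ⊆ U.row 0 := by
      intro x hx
      obtain ⟨j, hj⟩ := U.cover x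
      by_cases hj0 : j = 0
      · exact hj0 ▸ hj
      · exact absurd ((Finset.mem_filter.mp hx).2) (fun hc =>
          hdisjuv _ (hrow' j hj0 x hj) hc)
    have himfilt : ∀ A : Finset (Fin (m + p ^ s * n)),
        (Finset.univ.filter fun y => e y ∈ A).image e = A ∩ Nc := by
      intro A
      ext z
      simp only [Finset.mem_image, Finset.mem_inter]
      constructor
      · rintro ⟨y, hy, rfl⟩
        exact ⟨(Finset.mem_filter.mp hy).2,
          Finset.mem_filter.mpr ⟨Finset.mem_univ _, heS y⟩⟩
      · rintro ⟨hz, hzc⟩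
        have hz2 : z ∈ Finset.univ.image e := by
          rw [herange]; exact hzc
        obtain ⟨y, _, rfl⟩ := Finset.mem_image.mp hz2
        exact ⟨y, Finset.mem_filter.mpr ⟨Finset.mem_univ y, hz⟩, rfl⟩
    have hrowNc : ∀ j, j ≠ 0 → U.row j ∩ Nc = U.row j := by
      intro j hj
      exact Finset.inter_eq_left.mpr
        (fun x hx => Finset.mem_filter.mpr ⟨Finset.mem_univ x, hrow' j hj x hx⟩)
    have hrow0Nc : U.row 0 ∩ Nc = U.row 0 \ Nb := by
      ext x
      simp only [Finset.mem_inter, Finset.mem_sdiff]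
      constructor
      · rintro ⟨hx, hxc⟩
        refine ⟨hx, fun hc => ?_⟩
        exact hdisjuv _ ((Finset.mem_filter.mp hxc).2) ((Finset.mem_filter.mp hc).2)
      · rintro ⟨hx, hxb⟩
        refine ⟨hx, ?_⟩
        rcases hxor x with ⟨h1, _⟩ | ⟨h1, _⟩
        · exact Finset.mem_filter.mpr ⟨Finset.mem_univ x, h1⟩
        · exact absurd (Finset.mem_filter.mpr ⟨Finset.mem_univ x, h1⟩) hxb
    have hcardB : ∀ j, (Finset.univ.filter fun y => e y ∈ U.row j).card = lam j := by
      intro j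
      have h1 : (Finset.univ.filter fun y => e y ∈ U.row j).card = (U.row j ∩ Nc).card := by
        rw [← himfilt, Finset.card_image_of_injective _ heinj]
      by_cases hj : j = 0
      · subst hj
        rw [h1, hrow0Nc, Finset.card_sdiff_of_subset hNbrow0, U.card_row, hNbcard]
        simp
      · rw [h1, hrowNc j hj, U.card_row]
        simp [if_neg hj]
    refine ⟨⟨⟨fun j => Finset.univ.filter fun y => e y ∈ U.row j, ?_, hcardB, ?_⟩, ?_⟩, ?_⟩
    · intro i j hij
      refine Finset.disjoint_left.mpr ?_
      intro y hy hy'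
      exact (Finset.disjoint_left.mp (U.disj i j hij)) (Finset.mem_filter.mp hy).2
        (Finset.mem_filter.mp hy').2
    · intro y
      obtain ⟨j, hj⟩ := U.cover (e y)
      exact ⟨j, Finset.mem_filter.mpr ⟨Finset.mem_univ y, hj⟩⟩
    · intro j x y hxy hx
      have h3 : f3 (e x) = f3 (e y) := by
        rw [he3, he3, hxy]
      exact Finset.mem_filter.mpr
        ⟨Finset.mem_univ y, hU j (e x) (e y) h3 (Finset.mem_filter.mp hx).2⟩
    · apply Subtype.ext
      apply Tabloid.ext'
      funext j
      show rowFwd e Nb _ j = U.row j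
      by_cases hj : j = 0
      · subst hj
        simp only [rowFwd, eq_self_iff_true, if_true]
        show (Finset.univ.filter fun y => e y ∈ U.row 0).image e ∪ Nb = U.row 0
        rw [himfilt, hrow0Nc, Finset.sdiff_union_of_subset hNbrow0]
      · simp only [rowFwd, if_neg hj]
        show (Finset.univ.filter fun y => e y ∈ U.row j).image e = U.row j
        rw [himfilt, hrowNc j hj]
end
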